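/- Let (R, m) be a commutative noetherian local ring and M a nonzero cyclic reduced excellent R-module, i.e. M is generated by one element, I•M = γ_I(M) for every ideal I of R, and the only submodule U of M with m•U = U is U = 0. Then M is isomorphic to R as an R-module, R is artinian, and the socle So(R) = { r ∈ R : m•r = 0 } is a simple R-module; in particular R is a quasi-Frobenius ring. -/

import Mathlib

universe u v

open IsLocalRing Submodule

namespace ExcellentQFAux

variable {R : Type u} [CommRing R]

/-! ### Annihilator basics -/

abbrev ann (I : Ideal R) : Ideal R := Submodule.annihilator I

lemma mem_ann {I : Ideal R} {r : R} : r ∈ ann I ↔ ∀ x ∈ I, r * x = 0 := by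
  simpa [smul_eq_mul] using Submodule.mem_annihilator (N := I) (r := r)

lemma ann_antitone {I J : Ideal R} (h : I ≤ J) : ann J ≤ ann I := fun r hr =>
  mem_ann.mpr fun x hx => mem_ann.mp hr x (h hx)

lemma le_ann_ann (I : Ideal R) : I ≤ ann (ann I) := fun r hr =>
  mem_ann.mpr fun x hx => by rw [mul_comm]; exact mem_ann.mp hx r hr

lemma ann_sup (I J : Ideal R) : ann (I ⊔ J) = ann I ⊓ ann J := by
  apply le_antisymm
  · exact le_inf (ann_antitone le_sup_left) (ann_antitone le_sup_right)
  · rintro r ⟨h1, h2⟩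
    refine mem_ann.mpr fun x hx => ?_
    obtain ⟨y, hy, z, hz, rfl⟩ := Submodule.mem_sup.mp hx
    rw [mul_add, mem_ann.mp h1 y hy, mem_ann.mp h2 z hz, add_zero]

lemma ann_bot : ann (⊥ : Ideal R) = ⊤ := by
  refine eq_top_iff.mpr fun r _ => mem_ann.mpr fun x hx => ?_
  rw [Submodule.mem_bot] at hx; rw [hx, mul_zero]

lemma ann_top : ann (⊤ : Ideal R) = ⊥ := by
  refine eq_bot_iff.mpr fun r hr => ?_
  simpa using mem_ann.mp hr 1 trivial

lemma mem_ann_span {a r : R} : r ∈ ann (Ideal.span {a}) ↔ r * a = 0 := by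
  constructor
  · intro h; exact mem_ann.mp h a (Ideal.mem_span_singleton_self a)
  · intro h
    refine mem_ann.mpr fun x hx => ?_
    obtain ⟨c, rfl⟩ := Ideal.mem_span_singleton'.mp hx
    rw [mul_comm c a, ← mul_assoc, h, zero_mul]

/-! ### A length-like function on the ideal lattice of an artinian ring -/

noncomputable def lam [IsArtinianRing R] : Ideal R → ℕ∞ :=
  (IsWellFounded.wf (r := ((· < ·) : Ideal R → Ideal R → Prop))).fix
    (fun I F => ⨆ J : {J : Ideal R // J < I}, F J.1 J.2 + 1)

lemma lam_def [IsArtinianRing R] (I : Ideal R) :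
    lam I = ⨆ J : {J : Ideal R // J < I}, lam J.1 + 1 := by
  unfold lam
  rw [WellFounded.fix_eq]

lemma lam_bot [IsArtinianRing R] : lam (⊥ : Ideal R) = 0 := by
  rw [lam_def]
  haveI : IsEmpty {J : Ideal R // J < ⊥} := ⟨fun J => absurd J.2 (not_lt_bot)⟩
  rw [iSup_of_empty]
  rfl

lemma lam_succ_le [IsArtinianRing R] {J I : Ideal R} (h : J < I) : lam J + 1 ≤ lam I := by
  rw [lam_def I]
  exact le_iSup (fun J : {J : Ideal R // J < I} => lam J.1 + 1) ⟨J, h⟩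

lemma lam_mono [IsArtinianRing R] {I J : Ideal R} (h : I ≤ J) : lam I ≤ lam J := by
  rcases eq_or_lt_of_le h with rfl | h
  · exact le_rfl
  · exact le_trans (le_self_add) (lam_succ_le h)

lemma lam_le_of [IsArtinianRing R] {I : Ideal R} {c : ℕ∞}
    (h : ∀ J < I, lam J + 1 ≤ c) : lam I ≤ c := by
  rw [lam_def I]
  exact iSup_le fun J => h J.1 J.2

/-- Simple-step lemma: adjoining an element whose multiples by the maximal ideal
fall into `y` raises `lam` by at most one. -/
lemma lam_sup_span_le [IsArtinianRing R] [IsLocalRing R] :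
    ∀ y : Ideal R, ∀ z : R, (∀ u ∈ maximalIdeal R, u * z ∈ y) →
      lam (y ⊔ Ideal.span {z}) ≤ lam y + 1 := by
  intro y
  induction y using (IsWellFounded.wf (r := ((· < ·) : Ideal R → Ideal R → Prop))).induction with
  | _ y IH =>
  intro z hz
  refine lam_le_of fun x hx => ?_
  refine add_le_add_left ?_ 1
  by_cases hxy : x ≤ y
  · exact lam_mono hxy
  · obtain ⟨v, hvx, hvy⟩ := SetLike.not_le_iff_exists.mp hxy
    have hvmem : v ∈ y ⊔ Ideal.span {z} := hx.le hvx
    obtain ⟨w, hw, t, ht, hvwt⟩ := Submodule.mem_sup.mp hvmem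
    obtain ⟨r, rfl⟩ := Ideal.mem_span_singleton'.mp ht
    have hr : IsUnit r := by
      by_contra hru
      exact hvy (hvwt ▸ y.add_mem hw (hz r hru))
    -- x = (x ⊓ y) ⊔ span {v}
    have hxeq : x ≤ (x ⊓ y) ⊔ Ideal.span {v} := by
      intro t' ht'
      have ht'mem : t' ∈ y ⊔ Ideal.span {z} := hx.le ht'
      obtain ⟨w', hw', s, hs, hws⟩ := Submodule.mem_sup.mp ht'mem
      obtain ⟨r', rfl⟩ := Ideal.mem_span_singleton'.mp hs
      by_cases hr' : r' ∈ maximalIdeal R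
      · exact Submodule.mem_sup_left ⟨ht', hws ▸ y.add_mem hw' (hz r' hr')⟩
      · have hr'u : IsUnit r' := by
          rwa [IsLocalRing.mem_maximalIdeal, mem_nonunits_iff, not_not] at hr'
        -- t' - (r' * r⁻¹) * v ∈ x ⊓ y
        have key : t' - (r' * ↑hr.unit⁻¹) * v ∈ x ⊓ y := by
          constructor
          · exact x.sub_mem ht' (x.mul_mem_left _ hvx)
          · have h1 : v - w = r * z := by rw [← hvwt]; ring
            have h2 : t' - w' = r' * z := by rw [← hws]; ring
            have h3 : (r' * ↑hr.unit⁻¹) * (v - w) = r' * z := by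
              rw [h1, mul_assoc, ← mul_assoc (↑hr.unit⁻¹ : R) r z, IsUnit.val_inv_mul, one_mul]
            have h4 : t' - w' = (r' * ↑hr.unit⁻¹) * (v - w) := by rw [h3]; exact h2
            have h5 : t' - (r' * ↑hr.unit⁻¹) * v = w' - (r' * ↑hr.unit⁻¹) * w := by
              linear_combination h4
            rw [h5]
            exact y.sub_mem hw' (y.mul_mem_left _ hw)
        have : t' = (t' - (r' * ↑hr.unit⁻¹) * v) + (r' * ↑hr.unit⁻¹) * v := by ring
        rw [this]
        exact Submodule.add_mem _ (Submodule.mem_sup_left key)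
          (Submodule.mem_sup_right (Ideal.mem_span_singleton'.mpr ⟨_, rfl⟩))
    have hxy' : x ⊓ y < y := by
      refine lt_of_le_of_ne inf_le_right fun he => ?_
      have hyx : y ≤ x := by rw [← he]; exact inf_le_left
      have hzx : z ∈ x := by
        have h1 : v - w = r * z := by rw [← hvwt]; ring
        have hz' : z = ↑hr.unit⁻¹ * (v - w) := by
          rw [h1, ← mul_assoc, IsUnit.val_inv_mul, one_mul]
        rw [hz']
        exact x.mul_mem_left _ (x.sub_mem hvx (hyx hw))
      exact absurd (sup_le hyx ((Ideal.span_singleton_le_iff_mem x).mpr hzx))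
        (not_le_of_gt hx)
    have hmv : ∀ u ∈ maximalIdeal R, u * v ∈ x ⊓ y := by
      intro u hu
      constructor
      · exact x.mul_mem_left u hvx
      · have : u * v = u * w + (u * r) * z := by rw [← hvwt]; ring
        rw [this]
        exact y.add_mem (y.mul_mem_left u hw) (hz _ ((maximalIdeal R).mul_mem_right r hu))
    calc lam x ≤ lam ((x ⊓ y) ⊔ Ideal.span {v}) := lam_mono hxeq
      _ ≤ lam (x ⊓ y) + 1 := IH (x ⊓ y) hxy' v hmv
      _ ≤ lam y := lam_succ_le hxy'

/-- Jump lemma -/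
lemma lam_jump [IsArtinianRing R] [IsLocalRing R] {K K' : Ideal R} (hle : K' ≤ K)
    (h1 : ∀ u ∈ K, ∀ v ∈ maximalIdeal R, v * u ∈ K')
    (h2 : ∀ z ∈ K, z ∉ K' → ∀ z' ∈ K, ∃ c, z' - c * z ∈ K') :
    lam K ≤ lam K' + 1 := by
  by_cases h : K ≤ K'
  · exact le_trans (lam_mono h) le_self_add
  · obtain ⟨z, hzK, hzK'⟩ := SetLike.not_le_iff_exists.mp h
    have hKeq : K = K' ⊔ Ideal.span {z} := by
      apply le_antisymm
      · intro z' hz'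
        obtain ⟨c, hc⟩ := h2 z hzK hzK' z' hz'
        have : z' = (z' - c * z) + c * z := by ring
        rw [this]
        exact Submodule.add_mem _ (Submodule.mem_sup_left hc)
          (Submodule.mem_sup_right (Ideal.mem_span_singleton'.mpr ⟨c, rfl⟩))
      · exact sup_le hle ((Ideal.span_singleton_le_iff_mem K).mpr hzK)
    rw [hKeq]
    exact lam_sup_span_le K' z (fun u hu => h1 z hzK u hu)

/-! ### Artinian from nilpotent maximal ideal -/

lemma artinian_step [IsNoetherianRing R] [IsLocalRing R] (I J : Ideal R) (hIJ : I ≤ J)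
    (hmul : ∀ v ∈ maximalIdeal R, ∀ x ∈ J, v * x ∈ I)
    (hI : IsArtinian R ↥I) : IsArtinian R ↥J := by
  classical
  set P : Submodule R ↥J := Submodule.comap (Submodule.subtype J) I with hP
  haveI : IsArtinian R ↥P := isArtinian_of_linearEquiv (Submodule.comapSubtypeEquivOfLe hIJ).symm
  have htor : Module.IsTorsionBySet R (↥J ⧸ P) ↑(maximalIdeal R) := by
    intro q a
    obtain ⟨⟨y, hy⟩, rfl⟩ := Submodule.Quotient.mk_surjective P q
    rw [← Submodule.Quotient.mk_smul, Submodule.Quotient.mk_eq_zero]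
    show ((a : R) • (⟨y, hy⟩ : ↥J) : ↥J) ∈ Submodule.comap (Submodule.subtype J) I
    simp only [Submodule.mem_comap]
    show (a : R) • y ∈ I
    rw [smul_eq_mul]
    exact hmul a a.2 y hy
  letI : Module (R ⧸ maximalIdeal R) (↥J ⧸ P) := htor.module
  haveI : IsScalarTower R (R ⧸ maximalIdeal R) (↥J ⧸ P) := htor.isScalarTower
  haveI : Module.Finite R ↥J := Module.Finite.iff_fg.mpr (IsNoetherian.noetherian J)
  haveI : Module.Finite R (↥J ⧸ P) := Module.Finite.of_surjective P.mkQ P.mkQ_surjective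
  haveI : Module.Finite (R ⧸ maximalIdeal R) (↥J ⧸ P) :=
    Module.Finite.of_restrictScalars_finite R _ _
  letI : Field (R ⧸ maximalIdeal R) := Ideal.Quotient.field _
  haveI : IsArtinian (R ⧸ maximalIdeal R) (↥J ⧸ P) := isArtinian_of_fg_of_artinian'
  -- transfer artinianity down to `R`
  let f : Submodule R (↥J ⧸ P) → Submodule (R ⧸ maximalIdeal R) (↥J ⧸ P) := fun N =>
    { carrier := N
      add_mem' := fun h1 h2 => N.add_mem h1 h2
      zero_mem' := N.zero_mem
      smul_mem' := by
        intro c xq hx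
        obtain ⟨r, rfl⟩ := Ideal.Quotient.mk_surjective c
        have hsm : (Ideal.Quotient.mk (maximalIdeal R) r) • xq = r • xq := by
          rw [← Ideal.Quotient.algebraMap_eq, algebraMap_smul]
        show (Ideal.Quotient.mk (maximalIdeal R) r) • xq ∈ (N : Set (↥J ⧸ P))
        rw [hsm]
        exact N.smul_mem r hx }
  have fmono : StrictMono f := by
    intro N1 N2 h
    rw [lt_iff_le_and_ne] at h ⊢
    refine ⟨fun t ht => h.1 ht, fun he => h.2 ?_⟩
    apply SetLike.ext'
    have : (f N1 : Set (↥J ⧸ P)) = f N2 := by rw [he]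
    exact this
  haveI : IsArtinian R (↥J ⧸ P) := fmono.wellFoundedLT
  exact isArtinian_of_range_eq_ker P.subtype P.mkQ
    (by rw [Submodule.range_subtype, Submodule.ker_mkQ])

lemma artinian_of_pow_max_eq_bot [IsNoetherianRing R] [IsLocalRing R] {N : ℕ}
    (hN : maximalIdeal R ^ N = ⊥) : IsArtinianRing R := by
  have base : IsArtinian R ↥(maximalIdeal R ^ N : Ideal R) := by
    rw [hN]
    exact inferInstance
  have all : ∀ d i : ℕ, i + d = N → IsArtinian R ↥(maximalIdeal R ^ i : Ideal R) := by
    intro d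
    induction d with
    | zero => intro i hi; rw [Nat.add_zero] at hi; rw [hi]; exact base
    | succ d ih =>
      intro i hi
      have h1 : IsArtinian R ↥(maximalIdeal R ^ (i + 1) : Ideal R) := ih (i+1) (by omega)
      refine artinian_step _ _ ?_ ?_ h1
      · rw [pow_succ]
        exact Ideal.mul_le_left
      · intro v hv x hx
        rw [pow_succ, show v * x = x * v from mul_comm v x]
        exact Ideal.mul_mem_mul hx hv
  have h0 : IsArtinian R ↥(maximalIdeal R ^ 0 : Ideal R) := all N 0 (by omega)
  rw [pow_zero, Ideal.one_eq_top] at h0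
  exact isArtinian_of_linearEquiv (Submodule.topEquiv (R := R) (M := R))

/-! ### The main ring-theoretic result -/

theorem ringQF [IsNoetherianRing R] [IsLocalRing R]
    (hstar : ∀ a c : R, (∀ r : R, r * a = 0 → r * c = 0) → ∃ s, c = a * s)
    (hnil : ∀ a ∈ maximalIdeal R, ∃ n : ℕ, a ^ n = 0) :
    IsArtinianRing R ∧
      IsSimpleModule R ↥(Submodule.torsionBySet R R ((maximalIdeal R : Ideal R) : Set R)) ∧
      Module.Injective R R := by
  classical
  have hrad : maximalIdeal R ≤ Ideal.radical ⊥ := by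
    intro a ha
    obtain ⟨n, hn⟩ := hnil a ha
    exact ⟨n, by simp [hn]⟩
  obtain ⟨N, hNle⟩ := Ideal.exists_pow_le_of_le_radical_of_fg hrad (IsNoetherian.noetherian _)
  have hN : maximalIdeal R ^ N = ⊥ := le_bot_iff.mp hNle
  haveI hart : IsArtinianRing R := artinian_of_pow_max_eq_bot hN
  set S : Ideal R := Submodule.torsionBySet R R ((maximalIdeal R : Ideal R) : Set R) with hS
  have memS : ∀ c : R, c ∈ S ↔ ∀ u ∈ maximalIdeal R, u * c = 0 := by
    intro c
    rw [hS, Submodule.mem_torsionBySet_iff]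
    constructor
    · intro h u hu
      simpa using h ⟨u, hu⟩
    · intro h a
      simpa using h a a.2
  have mem_max_of_ann : ∀ c r : R, c ≠ 0 → r * c = 0 → r ∈ maximalIdeal R := by
    intro c r hc h
    by_contra hr
    have hu : IsUnit r := by
      rwa [IsLocalRing.mem_maximalIdeal, mem_nonunits_iff, not_not] at hr
    obtain ⟨u, rfl⟩ := hu
    refine hc ?_
    calc c = ↑u⁻¹ * (↑u * c) := by rw [← mul_assoc, Units.inv_mul, one_mul]
      _ = 0 := by rw [h, mul_zero]
  -- a nonzero socle element
  have hexN : ∃ n, maximalIdeal R ^ n = ⊥ := ⟨N, hN⟩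
  have hks : maximalIdeal R ^ (Nat.find hexN) = ⊥ := Nat.find_spec hexN
  have hk0pos : Nat.find hexN ≠ 0 := by
    intro h
    rw [h, pow_zero, Ideal.one_eq_top] at hks
    exact one_ne_zero ((Submodule.eq_bot_iff _).mp hks 1 trivial)
  obtain ⟨k1, hk1⟩ : ∃ k1, Nat.find hexN = k1 + 1 := ⟨Nat.find hexN - 1, by omega⟩
  have hk1ne : maximalIdeal R ^ k1 ≠ ⊥ := Nat.find_min hexN (by omega)
  obtain ⟨b, hbmem, hbne⟩ := (Submodule.ne_bot_iff _).mp hk1ne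
  have hbS : b ∈ S := by
    rw [memS]
    intro u hu
    have h1 : u * b ∈ maximalIdeal R ^ (Nat.find hexN) := by
      rw [hk1, pow_succ, show u * b = b * u from mul_comm u b]
      exact Ideal.mul_mem_mul hbmem hu
    rw [hks] at h1
    simpa using h1
  -- socle generation
  have socgen : ∀ s ∈ S, s ≠ 0 → ∀ s' ∈ S, ∃ c : R, s' = c * s := by
    intro s hs hsne s' hs'
    obtain ⟨c, hc⟩ := hstar s s' (fun r hr => (memS s').mp hs' r (mem_max_of_ann s r hsne hr))
    exact ⟨c, by rw [hc, mul_comm]⟩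
  -- simplicity of the socle
  have hker : LinearMap.ker (LinearMap.toSpanSingleton R R b) = maximalIdeal R := by
    ext r
    rw [LinearMap.mem_ker, LinearMap.toSpanSingleton_apply, smul_eq_mul]
    exact ⟨fun h => mem_max_of_ann b r hbne h, fun h => (memS b).mp hbS r h⟩
  have hrange : LinearMap.range (LinearMap.toSpanSingleton R R b) = S := by
    apply le_antisymm
    · rw [← LinearMap.span_singleton_eq_range]
      exact (Submodule.span_singleton_le_iff_mem b S).mpr hbS
    · intro s' hs'
      obtain ⟨c, hc⟩ := socgen b hbS hbne s' hs'
      exact ⟨c, by rw [LinearMap.toSpanSingleton_apply, smul_eq_mul, ← hc]⟩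
  have hsimp : IsSimpleModule R ↥S := by
    haveI : IsSimpleModule R (R ⧸ maximalIdeal R) :=
      isSimpleModule_iff_isCoatom.mpr (IsLocalRing.maximalIdeal.isMaximal R).out
    exact IsSimpleModule.congr
      ((LinearEquiv.ofEq _ _ hrange.symm).trans
        ((LinearMap.quotKerEquivRange _).symm.trans (Submodule.quotEquivOfEq _ _ hker)))
  -- existence of "one step up" elements
  have exist_up : ∀ I : Ideal R, I ≠ ⊤ → ∃ a, a ∉ I ∧ ∀ u ∈ maximalIdeal R, u * a ∈ I := by
    intro I hI
    have hex : ∃ k, maximalIdeal R ^ k ≤ I := ⟨N, hN ▸ bot_le⟩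
    have hkk : maximalIdeal R ^ (Nat.find hex) ≤ I := Nat.find_spec hex
    have hkpos : Nat.find hex ≠ 0 := by
      intro h
      rw [h, pow_zero, Ideal.one_eq_top] at hkk
      exact hI (top_le_iff.mp hkk)
    obtain ⟨k', hk'⟩ : ∃ k', Nat.find hex = k' + 1 := ⟨Nat.find hex - 1, by omega⟩
    have hnle : ¬ maximalIdeal R ^ k' ≤ I := Nat.find_min hex (by omega)
    obtain ⟨a, haP, haI⟩ := SetLike.not_le_iff_exists.mp hnle
    refine ⟨a, haI, fun u hu => hkk ?_⟩
    rw [hk', pow_succ, show u * a = a * u from mul_comm u a]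
    exact Ideal.mul_mem_mul haP hu
  -- elements `z * a` land in the socle
  have in_socle : ∀ (I : Ideal R) (a : R), (∀ u ∈ maximalIdeal R, u * a ∈ I) →
      ∀ z ∈ ann I, z * a ∈ S := by
    intro I a ha z hz
    rw [memS]
    intro u hu
    rw [show u * (z * a) = z * (u * a) by ring]
    exact mem_ann.mp hz _ (ha u hu)
  -- the jump inequality
  have jump : ∀ (I : Ideal R) (a : R), (∀ u ∈ maximalIdeal R, u * a ∈ I) →
      lam (ann I) ≤ lam (ann (I ⊔ Ideal.span {a})) + 1 := by
    intro I a ha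
    have hann2 : ann (I ⊔ Ideal.span {a}) = ann I ⊓ ann (Ideal.span {a}) := ann_sup _ _
    refine lam_jump (ann_antitone le_sup_left) ?_ ?_
    · intro u hu v hv
      rw [hann2, Submodule.mem_inf]
      refine ⟨(ann I).mul_mem_left v hu, ?_⟩
      rw [mem_ann_span, mul_assoc]
      have hua : u * a ∈ S := in_socle I a ha u hu
      exact (memS _).mp hua v hv
    · intro z hz hz' z' hz'K
      have hza : z * a ∈ S := in_socle I a ha z hz
      have hz'a : z' * a ∈ S := in_socle I a ha z' hz'K
      have hzane : z * a ≠ 0 := by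
        intro h0
        refine hz' ?_
        rw [hann2, Submodule.mem_inf]
        exact ⟨hz, mem_ann_span.mpr h0⟩
      obtain ⟨c, hc⟩ := socgen (z * a) hza hzane (z' * a) hz'a
      refine ⟨c, ?_⟩
      rw [hann2, Submodule.mem_inf]
      refine ⟨(ann I).sub_mem hz'K ((ann I).mul_mem_left c hz), ?_⟩
      rw [mem_ann_span]
      linear_combination hc
  -- B2 and finiteness, by noetherian (downward) induction
  have hB2 : ∀ I : Ideal R, lam (ann I) + lam I ≤ lam (⊤ : Ideal R) ∧ lam (ann I) ≠ ⊤ := by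
    intro I
    induction I using
        (IsWellFounded.wf (r := ((· > ·) : Ideal R → Ideal R → Prop))).induction with
    | _ I IH =>
    by_cases hI : I = ⊤
    · subst hI
      rw [ann_top, lam_bot]
      exact ⟨by simp, by simp⟩
    · obtain ⟨a, haI, ha⟩ := exist_up I hI
      have hlt : I < I ⊔ Ideal.span {a} := by
        refine lt_of_le_of_ne le_sup_left fun he => haI ?_
        rw [he]
        exact Submodule.mem_sup_right (Ideal.mem_span_singleton_self a)
      have IH2 := IH (I ⊔ Ideal.span {a}) hlt
      have hjump : lam (ann I) ≤ lam (ann (I ⊔ Ideal.span {a})) + 1 := jump I a ha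
      constructor
      · calc lam (ann I) + lam I ≤ (lam (ann (I ⊔ Ideal.span {a})) + 1) + lam I :=
            add_le_add_left hjump _
          _ = lam (ann (I ⊔ Ideal.span {a})) + (lam I + 1) := by
            rw [add_assoc, add_comm 1 (lam I)]
          _ ≤ lam (ann (I ⊔ Ideal.span {a})) + lam (I ⊔ Ideal.span {a}) :=
            add_le_add_right (lam_succ_le hlt) _
          _ ≤ lam (⊤ : Ideal R) := IH2.1
      · intro htop
        rw [htop] at hjump
        have h2 : lam (ann (I ⊔ Ideal.span {a})) + 1 = ⊤ := top_le_iff.mp hjump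
        rcases WithTop.add_eq_top.mp h2 with h3 | h3
        · exact IH2.2 h3
        · exact ENat.one_ne_top h3
  have hfin : lam (⊤ : Ideal R) ≠ ⊤ := by
    have h := (hB2 ⊥).2
    rwa [ann_bot] at h
  -- B1 by artinian (upward) induction
  have hB1 : ∀ I : Ideal R, lam (⊤ : Ideal R) ≤ lam (ann I) + lam I := by
    intro I
    induction I using
        (IsWellFounded.wf (r := ((· < ·) : Ideal R → Ideal R → Prop))).induction with
    | _ I IH =>
    by_cases hI : I = ⊥
    · subst hI
      rw [ann_bot]
      exact le_self_add
    · obtain ⟨I', hI'mem, hI'max⟩ :=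
        (set_has_maximal_iff_noetherian.mpr inferInstance) {J : Ideal R | J < I}
          ⟨⊥, bot_lt_iff_ne_bot.mpr hI⟩
      obtain ⟨a, haI, haI'⟩ := SetLike.exists_of_lt (show I' < I from hI'mem)
      have hIeq : I' ⊔ Ideal.span {a} = I := by
        have hle : I' ⊔ Ideal.span {a} ≤ I :=
          sup_le hI'mem.le ((Ideal.span_singleton_le_iff_mem I).mpr haI)
        rcases eq_or_lt_of_le hle with h | h
        · exact h
        · exact absurd h (by
            have hlt' : I' < I' ⊔ Ideal.span {a} := by
              refine lt_of_le_of_ne le_sup_left fun he => haI' ?_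
              rw [he]
              exact Submodule.mem_sup_right (Ideal.mem_span_singleton_self a)
            exact fun hmem => hI'max _ hmem hlt')
      have hma : ∀ u ∈ maximalIdeal R, u * a ∈ I' := by
        intro u hu
        by_contra hua
        have h1 : I' < I' ⊔ Ideal.span {u * a} := by
          refine lt_of_le_of_ne le_sup_left fun he => hua ?_
          rw [he]
          exact Submodule.mem_sup_right (Ideal.mem_span_singleton_self _)
        have h2 : I' ⊔ Ideal.span {u * a} ≤ I :=
          sup_le hI'mem.le ((Ideal.span_singleton_le_iff_mem I).mpr (I.mul_mem_left u haI))
        have h3 : I' ⊔ Ideal.span {u * a} = I := by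
          rcases eq_or_lt_of_le h2 with h | h
          · exact h
          · exact absurd h1 (hI'max _ h)
        have ha2 : a ∈ I' ⊔ Ideal.span {u * a} := h3 ▸ haI
        obtain ⟨w, hw, t, ht, hwt⟩ := Submodule.mem_sup.mp ha2
        obtain ⟨c, rfl⟩ := Ideal.mem_span_singleton'.mp ht
        have hcu : c * u ∈ maximalIdeal R := (maximalIdeal R).mul_mem_left c hu
        have hunit : IsUnit (1 - c * u) :=
          isUnit_one_sub_self_of_mem_nonunits _ ((IsLocalRing.mem_maximalIdeal _).mp hcu)
        refine haI' ?_
        have hw' : a * (1 - c * u) = w := by linear_combination - hwt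
        have h5 : (↑hunit.unit⁻¹ : R) * (1 - c * u) = 1 := IsUnit.val_inv_mul hunit
        have heq : a = ↑hunit.unit⁻¹ * w := by
          calc a = a * ((↑hunit.unit⁻¹ : R) * (1 - c * u)) := by rw [h5, mul_one]
            _ = ↑hunit.unit⁻¹ * (a * (1 - c * u)) := by ring
            _ = ↑hunit.unit⁻¹ * w := by rw [hw']
        rw [heq]
        exact Ideal.mul_mem_left _ _ hw
      have hjump : lam (ann I') ≤ lam (ann I) + 1 := by
        have h := jump I' a hma
        rwa [hIeq] at h
      calc lam (⊤ : Ideal R) ≤ lam (ann I') + lam I' := IH I' hI'mem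
        _ ≤ (lam (ann I) + 1) + lam I' := add_le_add_left hjump _
        _ = lam (ann I) + (lam I' + 1) := by rw [add_assoc, add_comm 1 (lam I')]
        _ ≤ lam (ann I) + lam I := add_le_add_right (lam_succ_le hI'mem) _
  -- reflexivity of annihilators
  have hrefl : ∀ I : Ideal R, ann (ann I) = I := by
    intro I
    refine le_antisymm ?_ (le_ann_ann I)
    by_contra hcon
    obtain ⟨c, hcA, hcI⟩ := SetLike.not_le_iff_exists.mp hcon
    have hann2 : ann (I ⊔ Ideal.span {c}) = ann I := by
      refine le_antisymm (ann_antitone le_sup_left) ?_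
      intro u hu
      rw [ann_sup]
      rw [Submodule.mem_inf]
      refine ⟨hu, mem_ann_span.mpr ?_⟩
      have h := mem_ann.mp hcA u hu
      rwa [mul_comm] at h
    have hlt : I < I ⊔ Ideal.span {c} := by
      refine lt_of_le_of_ne le_sup_left fun he => hcI ?_
      rw [he]
      exact Submodule.mem_sup_right (Ideal.mem_span_singleton_self c)
    have hcontra : lam (⊤ : Ideal R) + 1 ≤ lam (⊤ : Ideal R) := by
      calc lam (⊤ : Ideal R) + 1 ≤ (lam (ann I) + lam I) + 1 := add_le_add_left (hB1 I) _
        _ = lam (ann I) + (lam I + 1) := by rw [add_assoc]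
        _ ≤ lam (ann I) + lam (I ⊔ Ideal.span {c}) := add_le_add_right (lam_succ_le hlt) _
        _ = lam (ann (I ⊔ Ideal.span {c})) + lam (I ⊔ Ideal.span {c}) := by rw [hann2]
        _ ≤ lam (⊤ : Ideal R) := (hB2 _).1
    exact absurd ((ENat.add_one_le_iff hfin).mp hcontra) (lt_irrefl _)
  -- the intersection law
  have law : ∀ K L : Ideal R, ann (K ⊓ L) = ann K ⊔ ann L := by
    intro K L
    conv_lhs => rw [← hrefl K, ← hrefl L, ← ann_sup]
    exact hrefl _
  -- Baer's criterion
  have key : ∀ I : Ideal R, ∀ g : ↥I →ₗ[R] R, ∃ t : R, ∀ x (hx : x ∈ I), g ⟨x, hx⟩ = t * x := by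
    intro I
    refine Submodule.fg_induction (motive := fun (I : Ideal R) _ => ∀ g : ↥I →ₗ[R] R, ∃ t : R, ∀ x (hx : x ∈ I), g ⟨x, hx⟩ = t * x)
      ?_ ?_ I (IsNoetherian.noetherian I)
    · intro x g
      have hx : x ∈ Submodule.span R {x} := Submodule.mem_span_singleton_self x
      have hg : ∀ r : R, r * x = 0 → r * g ⟨x, hx⟩ = 0 := by
        intro r hr
        have h1 : r • (⟨x, hx⟩ : ↥(Submodule.span R {x})) = 0 := by
          apply Subtype.ext
          show r • x = 0
          rw [smul_eq_mul, hr]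
        calc r * g ⟨x, hx⟩ = g (r • ⟨x, hx⟩) := by rw [map_smul, smul_eq_mul]
          _ = 0 := by rw [h1, map_zero]
      obtain ⟨s, hs⟩ := hstar x (g ⟨x, hx⟩) hg
      refine ⟨s, fun y hy => ?_⟩
      obtain ⟨c, hc⟩ := Submodule.mem_span_singleton.mp hy
      have h2 : (⟨y, hy⟩ : ↥(Submodule.span R {x})) = c • ⟨x, hx⟩ := by
        apply Subtype.ext
        show y = c • x
        rw [hc]
      rw [h2, map_smul, smul_eq_mul, hs, ← hc, smul_eq_mul]
      ring
    · intro I1 I2 _ _ h1 h2 g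
      obtain ⟨t1, ht1⟩ := h1 (g ∘ₗ Submodule.inclusion le_sup_left)
      obtain ⟨t2, ht2⟩ := h2 (g ∘ₗ Submodule.inclusion le_sup_right)
      have hd : t1 - t2 ∈ ann (I1 ⊓ I2) := by
        rw [mem_ann]
        intro y hy
        have hy1 : y ∈ I1 := (Submodule.mem_inf.mp hy).1
        have hy2 : y ∈ I2 := (Submodule.mem_inf.mp hy).2
        have e1 : g (Submodule.inclusion le_sup_left ⟨y, hy1⟩) = t1 * y := ht1 y hy1
        have e2 : g (Submodule.inclusion le_sup_right ⟨y, hy2⟩) = t2 * y := ht2 y hy2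
        have e3 : Submodule.inclusion (le_sup_left : I1 ≤ I1 ⊔ I2) ⟨y, hy1⟩ =
            Submodule.inclusion (le_sup_right : I2 ≤ I1 ⊔ I2) ⟨y, hy2⟩ := rfl
        rw [sub_mul, ← e1, e3, e2, sub_self]
      rw [law] at hd
      obtain ⟨u, hu, v, hv, huv⟩ := Submodule.mem_sup.mp hd
      refine ⟨t1 - u, fun y hy => ?_⟩
      obtain ⟨y1, hy1, y2, hy2, hyy⟩ := Submodule.mem_sup.mp hy
      have h3 : (⟨y, hy⟩ : ↥(I1 ⊔ I2)) =
          Submodule.inclusion le_sup_left ⟨y1, hy1⟩ +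
            Submodule.inclusion le_sup_right ⟨y2, hy2⟩ := by
        apply Subtype.ext
        show y = y1 + y2
        exact hyy.symm
      rw [h3, map_add]
      have e1 : g (Submodule.inclusion le_sup_left ⟨y1, hy1⟩) = t1 * y1 := ht1 y1 hy1
      have e2 : g (Submodule.inclusion le_sup_right ⟨y2, hy2⟩) = t2 * y2 := ht2 y2 hy2
      rw [e1, e2]
      have hu0 : u * y1 = 0 := mem_ann.mp hu y1 hy1
      have hv0 : v * y2 = 0 := mem_ann.mp hv y2 hy2
      have ht2' : t2 = t1 - u - v := by linear_combination huv
      rw [ht2']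
      linear_combination (t1 - u) * hyy + hu0 - hv0
  have hBaer : Module.Baer R R := by
    intro I g
    obtain ⟨t, ht⟩ := key I g
    refine ⟨LinearMap.toSpanSingleton R R t, fun x hx => ?_⟩
    rw [LinearMap.toSpanSingleton_apply, smul_eq_mul, ht x hx, mul_comm]
  exact ⟨hart, hsimp, hBaer.injective⟩

end ExcellentQFAux

theorem cyclic_reduced_excellent_QF
    {R : Type u} [CommRing R] [IsNoetherianRing R] [IsLocalRing R]
    (M : Type u) [AddCommGroup M] [Module R M]
    (hcyc : ∃ x : M, Submodule.span R {x} = ⊤)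
    (hM : ∀ I : Ideal R, I • (⊤ : Submodule R M) = ⨆ f : I →ₗ[R] M, LinearMap.range f)
    (hred : ∀ U : Submodule R M, IsLocalRing.maximalIdeal R • U = U → U = ⊥)
    (hne : Nontrivial M) :
    Nonempty (M ≃ₗ[R] R) ∧ IsArtinianRing R ∧
      IsSimpleModule R
        ↥(Submodule.torsionBySet R R ((IsLocalRing.maximalIdeal R : Ideal R) : Set R)) ∧
      Module.Injective R R := by
  classical
  open ExcellentQFAux in
  obtain ⟨x, hx⟩ := hcyc
  -- the "star" property coming from excellence at principal ideals
  have L0 : ∀ (a : R) (c : M), (∀ r : R, r * a = 0 → r • c = 0) → ∃ y : M, c = a • y := by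
    intro a c hc
    set g : R →ₗ[R] R := LinearMap.toSpanSingleton R R a with hg
    have hker : LinearMap.ker g ≤ LinearMap.ker (LinearMap.toSpanSingleton R M c) := by
      intro r hr
      rw [LinearMap.mem_ker] at hr ⊢
      rw [LinearMap.toSpanSingleton_apply]
      apply hc
      have h0 : r • a = 0 := hr
      rwa [smul_eq_mul] at h0
    set h : (R ⧸ LinearMap.ker g) →ₗ[R] M :=
      Submodule.liftQ _ (LinearMap.toSpanSingleton R M c) hker with hh
    have hspan : (Ideal.span {a} : Submodule R R) = LinearMap.range g :=
      LinearMap.span_singleton_eq_range R R a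
    set e1 : ↥(Ideal.span {a} : Ideal R) ≃ₗ[R] ↥(LinearMap.range g) :=
      LinearEquiv.ofEq _ _ hspan with he1
    set f : ↥(Ideal.span {a} : Ideal R) →ₗ[R] M :=
      h ∘ₗ ((g.quotKerEquivRange).symm.toLinearMap ∘ₗ e1.toLinearMap) with hf
    have hcrange : c ∈ LinearMap.range f := by
      refine ⟨⟨a, Ideal.mem_span_singleton_self a⟩, ?_⟩
      have h2 : (g.quotKerEquivRange).symm (e1 ⟨a, Ideal.mem_span_singleton_self a⟩) =
          Submodule.Quotient.mk (1 : R) := by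
        rw [LinearEquiv.symm_apply_eq]
        apply Subtype.ext
        rw [LinearMap.quotKerEquivRange_apply_mk]
        show (a : R) = g 1
        rw [hg, LinearMap.toSpanSingleton_apply, one_smul]
      show h ((g.quotKerEquivRange).symm (e1 ⟨a, Ideal.mem_span_singleton_self a⟩)) = c
      rw [h2, hh, Submodule.liftQ_apply, LinearMap.toSpanSingleton_apply, one_smul]
    have hmem : c ∈ (Ideal.span {a} : Ideal R) • (⊤ : Submodule R M) := by
      rw [hM]
      exact le_iSup (fun f : ↥(Ideal.span {a} : Ideal R) →ₗ[R] M => LinearMap.range f) f hcrange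
    refine Submodule.smul_induction_on hmem ?_ ?_
    · intro r hr n _
      obtain ⟨u, rfl⟩ := Ideal.mem_span_singleton'.mp hr
      exact ⟨u • n, by rw [smul_smul, mul_comm u a]⟩
    · rintro p q ⟨y1, rfl⟩ ⟨y2, rfl⟩
      exact ⟨y1 + y2, by rw [smul_add]⟩
  -- every element of the maximal ideal acts nilpotently on x
  have hpow : ∀ a ∈ IsLocalRing.maximalIdeal R, ∃ n : ℕ, a ^ n • x = 0 := by
    intro a ha
    set K : ℕ →o Ideal R :=
      ⟨fun n => LinearMap.ker (LinearMap.toSpanSingleton R R (a ^ n)), by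
        intro i j hij r hr
        rw [LinearMap.mem_ker, LinearMap.toSpanSingleton_apply, smul_eq_mul] at hr ⊢
        obtain ⟨d, rfl⟩ : ∃ d, j = i + d := ⟨j - i, by omega⟩
        rw [pow_add, ← mul_assoc, hr, zero_mul]⟩ with hK
    obtain ⟨n, hn⟩ := monotone_stabilizes_iff_noetherian.mpr inferInstance K
    have hstab : K (n + 1) ≤ K n := le_of_eq (hn (n + 1) (Nat.le_succ n)).symm
    obtain ⟨y, hy⟩ := L0 (a ^ (n + 1)) (a ^ n • x) (by
      intro r hr
      have hrK : r ∈ K (n + 1) := hr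
      have hrn : r * a ^ n = 0 := hstab hrK
      rw [smul_smul, hrn, zero_smul])
    obtain ⟨s, hs⟩ := Submodule.mem_span_singleton.mp (hx ▸ Submodule.mem_top : y ∈ Submodule.span R {x})
    refine ⟨n, ?_⟩
    have hsy : a ^ n • x = (a ^ (n + 1) * s) • x := by
      rw [hy, ← hs, smul_smul]
    have has : a * s ∈ IsLocalRing.maximalIdeal R := (IsLocalRing.maximalIdeal R).mul_mem_right s ha
    have hunit : IsUnit (1 - a * s) :=
      IsLocalRing.isUnit_one_sub_self_of_mem_nonunits _ ((IsLocalRing.mem_maximalIdeal _).mp has)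
    have hzero : (a ^ n * (1 - a * s)) • x = 0 := by
      have : a ^ n * (1 - a * s) = a ^ n - a ^ (n + 1) * s := by ring
      rw [this, sub_smul, hsy, sub_self]
    calc a ^ n • x = ((↑hunit.unit⁻¹ : R) * (a ^ n * (1 - a * s))) • x := by
          rw [show (↑hunit.unit⁻¹ : R) * (a ^ n * (1 - a * s))
              = a ^ n * ((↑hunit.unit⁻¹ : R) * (1 - a * s)) by ring,
            IsUnit.val_inv_mul, mul_one]
      _ = (↑hunit.unit⁻¹ : R) • ((a ^ n * (1 - a * s)) • x) := by rw [smul_smul]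
      _ = 0 := by rw [hzero, smul_zero]
  -- m ^ N kills x
  have hxne : x ≠ 0 := by
    intro h0
    have : (⊤ : Submodule R M) = ⊥ := by
      rw [← hx, h0, Submodule.span_zero_singleton]
    obtain ⟨p, q, hpq⟩ := hne
    apply hpq
    have hp := (Submodule.eq_bot_iff _).mp this p Submodule.mem_top
    have hq := (Submodule.eq_bot_iff _).mp this q Submodule.mem_top
    rw [hp, hq]
  have hexNx : ∃ n : ℕ, (IsLocalRing.maximalIdeal R) ^ n ≤
      LinearMap.ker (LinearMap.toSpanSingleton R M x) := by
    apply Ideal.exists_pow_le_of_le_radical_of_fg ?_ (IsNoetherian.noetherian _)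
    intro a ha
    obtain ⟨n, hn⟩ := hpow a ha
    exact ⟨n, by rw [LinearMap.mem_ker, LinearMap.toSpanSingleton_apply]; exact hn⟩
  -- a nonzero socle element of M
  have hkill : ∀ r : R, r • x = 0 → ∀ c : M, r • c = 0 := by
    intro r hr c
    obtain ⟨s, hs⟩ := Submodule.mem_span_singleton.mp (hx ▸ Submodule.mem_top : c ∈ Submodule.span R {x})
    rw [← hs, smul_smul, mul_comm, ← smul_smul, hr, smul_zero]
  obtain ⟨c, hcne, hcsoc⟩ : ∃ c : M, c ≠ 0 ∧ ∀ u ∈ IsLocalRing.maximalIdeal R, u • c = 0 := by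
    have hkx : (IsLocalRing.maximalIdeal R) ^ (Nat.find hexNx) ≤
        LinearMap.ker (LinearMap.toSpanSingleton R M x) := Nat.find_spec hexNx
    have hkpos : Nat.find hexNx ≠ 0 := by
      intro h
      rw [h, pow_zero, Ideal.one_eq_top] at hkx
      have := hkx (Submodule.mem_top : (1:R) ∈ ⊤)
      rw [LinearMap.mem_ker, LinearMap.toSpanSingleton_apply, one_smul] at this
      exact hxne this
    obtain ⟨k', hk'⟩ : ∃ k', Nat.find hexNx = k' + 1 := ⟨Nat.find hexNx - 1, by omega⟩
    have hnle : ¬ (IsLocalRing.maximalIdeal R) ^ k' ≤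
        LinearMap.ker (LinearMap.toSpanSingleton R M x) := Nat.find_min hexNx (by omega)
    obtain ⟨r, hrP, hrK⟩ := SetLike.not_le_iff_exists.mp hnle
    refine ⟨r • x, ?_, ?_⟩
    · intro h0
      apply hrK
      rw [LinearMap.mem_ker, LinearMap.toSpanSingleton_apply]
      exact h0
    · intro u hu
      rw [smul_smul]
      have hmem : u * r ∈ (IsLocalRing.maximalIdeal R) ^ (Nat.find hexNx) := by
        rw [hk', pow_succ, show u * r = r * u from mul_comm u r]
        exact Ideal.mul_mem_mul hrP hu
      have := hkx hmem
      rwa [LinearMap.mem_ker, LinearMap.toSpanSingleton_apply] at this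
  -- x is a free generator
  have hinj : ∀ a : R, a • x = 0 → a = 0 := by
    intro a hax
    by_contra h0
    obtain ⟨y, hy⟩ := L0 a c (by
      intro r hr
      apply hcsoc
      by_contra hrm
      have hu : IsUnit r := by
        rwa [IsLocalRing.mem_maximalIdeal, mem_nonunits_iff, not_not] at hrm
      obtain ⟨v, rfl⟩ := hu
      apply h0
      calc a = ↑v⁻¹ * (↑v * a) := by rw [← mul_assoc, Units.inv_mul, one_mul]
        _ = 0 := by rw [hr, mul_zero])
    apply hcne
    rw [hy]
    obtain ⟨s, hs⟩ := Submodule.mem_span_singleton.mp (hx ▸ Submodule.mem_top : y ∈ Submodule.span R {x})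
    rw [← hs, smul_smul, mul_comm, ← smul_smul, hax, smul_zero]
  have hbij : Function.Bijective (LinearMap.toSpanSingleton R M x) := by
    constructor
    · rw [← LinearMap.ker_eq_bot]
      rw [Submodule.eq_bot_iff]
      intro a ha
      rw [LinearMap.mem_ker, LinearMap.toSpanSingleton_apply] at ha
      exact hinj a ha
    · rw [← LinearMap.range_eq_top, ← LinearMap.span_singleton_eq_range, hx]
  set e : R ≃ₗ[R] M := LinearEquiv.ofBijective _ hbij with he
  -- transfer the star property to R
  have hstar : ∀ a c : R, (∀ r : R, r * a = 0 → r * c = 0) → ∃ s : R, c = a * s := by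
    intro a c hc
    obtain ⟨y, hy⟩ := L0 a (c • x) (by
      intro r hr
      rw [smul_smul, hc r hr, zero_smul])
    obtain ⟨s, hs⟩ := Submodule.mem_span_singleton.mp (hx ▸ Submodule.mem_top : y ∈ Submodule.span R {x})
    refine ⟨s, ?_⟩
    have h1 : (c - a * s) • x = 0 := by
      rw [sub_smul, hy, ← hs, smul_smul, sub_self]
    have := hinj _ h1
    linear_combination this
  have hnil : ∀ a ∈ IsLocalRing.maximalIdeal R, ∃ n : ℕ, a ^ n = 0 := by
    intro a ha
    obtain ⟨n, hn⟩ := hpow a ha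
    exact ⟨n, hinj _ hn⟩
  obtain ⟨hart, hsimp, hinjv⟩ := ExcellentQFAux.ringQF hstar hnil
  exact ⟨⟨e.symm⟩, hart, hsimp, hinjv⟩
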